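/- Let M be a stochastic matrix viewed as a positive unital map between function spaces on finite sets I and J, with dual map M* on probability measures given by (M*μ)_j = Σ_i μ_i M_{ij}. Then for any two probability measures μ, ν on I, the relative entropy satisfies S(M*μ | M*ν) ≤ S(μ | ν). -/

import Mathlib

open Finset

/-- Log-sum inequality. -/
lemma log_sum_ineq {ι : Type*} (s : Finset ι) (a b : ι → ℝ)
    (ha : ∀ i ∈ s, 0 ≤ a i) (hb : ∀ i ∈ s, 0 ≤ b i)
    (hab : ∀ i ∈ s, b i = 0 → a i = 0) :
    (∑ i ∈ s, a i) * Real.log ((∑ i ∈ s, a i) / (∑ i ∈ s, b i)) ≤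
      ∑ i ∈ s, a i * Real.log (a i / b i) := by
  classical
  set A := ∑ i ∈ s, a i with hAdef
  set B := ∑ i ∈ s, b i with hBdef
  rcases eq_or_lt_of_le (Finset.sum_nonneg hb) with hB | hB
  · have hb0 : ∀ i ∈ s, b i = 0 :=
      (Finset.sum_eq_zero_iff_of_nonneg hb).1 hB.symm
    have ha0 : ∀ i ∈ s, a i = 0 := fun i hi => hab i hi (hb0 i hi)
    have hA0 : A = 0 := Finset.sum_eq_zero ha0
    rw [hA0, Finset.sum_eq_zero (fun i hi => by rw [ha0 i hi]; ring)]
    simp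
  · set t := s.filter (fun i => b i ≠ 0) with htdef
    have hbne : ∀ i ∈ t, b i ≠ 0 := fun i hi => (Finset.mem_filter.mp hi).2
    have hts : ∀ i ∈ t, i ∈ s := fun i hi => (Finset.mem_filter.mp hi).1
    have hBt : ∑ i ∈ t, b i = B := Finset.sum_filter_ne_zero s
    have hAt : ∑ i ∈ t, a i = A :=
      Finset.sum_filter_of_ne (fun i hi hai hbi => hai (hab i hi hbi))
    have hRt : ∑ i ∈ t, a i * Real.log (a i / b i) =
        ∑ i ∈ s, a i * Real.log (a i / b i) :=
      Finset.sum_filter_of_ne (by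
        intro i hi hne hbi
        exact hne (by rw [hab i hi hbi]; ring))
    have hJ := Real.convexOn_mul_log.map_sum_le
      (t := t) (w := fun i => b i / B) (p := fun i => a i / b i)
      (fun i _ => div_nonneg (hb i (hts i ‹_›)) hB.le)
      (by rw [← Finset.sum_div, hBt, div_self hB.ne'])
      (fun i hi => div_nonneg (ha i (hts i hi)) (hb i (hts i hi)))
    have h1 : ∑ i ∈ t, (b i / B) • (a i / b i) = A / B := by
      rw [← hAt, Finset.sum_div]
      refine Finset.sum_congr rfl fun i hi => ?_
      have := hbne i hi
      rw [smul_eq_mul]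
      field_simp
    have h2 : ∑ i ∈ t, (b i / B) • ((a i / b i) * Real.log (a i / b i)) =
        (∑ i ∈ t, a i * Real.log (a i / b i)) / B := by
      rw [Finset.sum_div]
      refine Finset.sum_congr rfl fun i hi => ?_
      have := hbne i hi
      rw [smul_eq_mul]
      field_simp
    rw [h1, h2] at hJ
    have := mul_le_mul_of_nonneg_left hJ hB.le
    rw [mul_div_cancel₀ _ hB.ne'] at this
    calc A * Real.log (A / B) = B * (A / B * Real.log (A / B)) := by
          have hB' : B ≠ 0 := hB.ne'
          field_simp
      _ ≤ ∑ i ∈ t, a i * Real.log (a i / b i) := this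
      _ = ∑ i ∈ s, a i * Real.log (a i / b i) := hRt

/-- Relative entropy `S(μ|ν) = Σ_i μ_i log(μ_i/ν_i)` of probability vectors,
with value `+∞` when μ is not absolutely continuous with respect to ν. -/
noncomputable def relEnt {I : Type} [Fintype I] (μ ν : I → ℝ) : EReal :=
  if ∀ i, ν i = 0 → μ i = 0 then
    ((∑ i, μ i * Real.log (μ i / ν i) : ℝ) : EReal)
  else ⊤

/-- monotonicity of relative entropy under the dual of a
stochastic (positive unital) map `M`: `S(M*μ | M*ν) ≤ S(μ | ν)`. -/
theorem stmt6 {I J : Type} [Fintype I] [Fintype J]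
    (M : I → J → ℝ) (hM0 : ∀ i j, 0 ≤ M i j) (hM1 : ∀ i, ∑ j, M i j = 1)
    (μ ν : I → ℝ)
    (hμ0 : ∀ i, 0 ≤ μ i) (hμ1 : ∑ i, μ i = 1)
    (hν0 : ∀ i, 0 ≤ ν i) (hν1 : ∑ i, ν i = 1) :
    relEnt (fun j => ∑ i, μ i * M i j) (fun j => ∑ i, ν i * M i j) ≤
      relEnt μ ν := by
  rw [relEnt, relEnt]
  by_cases hac : ∀ i, ν i = 0 → μ i = 0
  · have hab : ∀ j, ∀ i, ν i * M i j = 0 → μ i * M i j = 0 := by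
      intro j i h
      rcases mul_eq_zero.mp h with h | h
      · rw [hac i h, zero_mul]
      · rw [h, mul_zero]
    have hac' : ∀ j, (∑ i, ν i * M i j) = 0 → (∑ i, μ i * M i j) = 0 := by
      intro j h
      have h0 : ∀ i ∈ Finset.univ, ν i * M i j = 0 :=
        (Finset.sum_eq_zero_iff_of_nonneg
          (fun i _ => mul_nonneg (hν0 i) (hM0 i j))).1 h
      exact Finset.sum_eq_zero fun i hi => hab j i (h0 i hi)
    rw [if_pos hac, if_pos (fun j => hac' j)]
    rw [EReal.coe_le_coe_iff]
    calc ∑ j, (∑ i, μ i * M i j) *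
          Real.log ((∑ i, μ i * M i j) / (∑ i, ν i * M i j))
        ≤ ∑ j, ∑ i, (μ i * M i j) *
            Real.log ((μ i * M i j) / (ν i * M i j)) := by
          refine Finset.sum_le_sum fun j _ => ?_
          exact log_sum_ineq Finset.univ _ _
            (fun i _ => mul_nonneg (hμ0 i) (hM0 i j))
            (fun i _ => mul_nonneg (hν0 i) (hM0 i j))
            (fun i _ => hab j i)
      _ = ∑ i, μ i * Real.log (μ i / ν i) := by
          rw [Finset.sum_comm]
          refine Finset.sum_congr rfl fun i _ => ?_
          have : ∀ j, (μ i * M i j) * Real.log ((μ i * M i j) / (ν i * M i j))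
              = (μ i * Real.log (μ i / ν i)) * M i j := by
            intro j
            rcases eq_or_ne (M i j) 0 with h | h
            · rw [h]; ring
            · rw [mul_div_mul_right _ _ h]; ring
          rw [Finset.sum_congr rfl fun j _ => this j, ← Finset.mul_sum,
            hM1 i, mul_one]
  · rw [if_neg hac]
    exact le_top
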